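/- Let ħ, v_F > 0, V₀ ∈ ℝ, a < b, E ∈ ℝ with E ≠ 0 and E ≠ V₀, and let V(x) = V₀ for a < x < b, V(x) = 0 otherwise. Set k := |E|/(ħv_F), q := |E − V₀|/(ħv_F), s := sign(E), s′ := sign(E − V₀), α := (1 + s′/s)/2, β := (1 − s′/s)/2, and let t ∈ ℂ with |t| = 1. Define ψ : ℝ → ℂ² by ψ(x) = (e^{ikx}, s·e^{ikx}) for x < a; ψ(x) = (αe^{iqx} + βe^{−iqx}, s′(αe^{iqx} − βe^{−iqx})) for a < x < b; ψ(x) = (t·e^{ikx}, s·t·e^{ikx}) for x > b. Define n_s(x) := (1/2)·ψ(x)*σ_sψ(x) and J_s(x) := (ħ/2)·Im(ψ(x)*σ_sψ′(x)) for s = 0,1,2,3. Then for every x ∉ {a,b}: n₀(x) = 1, n₁(x) = s, n₂(x) = n₃(x) = 0, J₂(x) = J₃(x) = 0, v_F·J₀(x) = (E − V(x))·n₁(x), and v_F·J₁(x) = (E − V(x))·n₀(x). In particular the moments of this Klein-tunneling wave function form a piecewise-constant solution with v_F J₀ + n₁V = n₁E and v_F J₁ + n₀V = n₀E. -/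

import Mathlib

open Matrix Filter

/-- The Pauli matrices `σ₀, σ₁, σ₂, σ₃` as 2×2 complex matrices. -/
noncomputable def pauli : Fin 4 → Matrix (Fin 2) (Fin 2) ℂ :=
  ![!![1, 0; 0, 1], !![0, 1; 1, 0], !![0, -Complex.I; Complex.I, 0], !![1, 0; 0, -1]]

/-- One-dimensional spinorial densities `n_s(x) := (1/2)·ψ(x)*σ_s ψ(x)`. -/
noncomputable def nOneD (ψ : ℝ → Fin 2 → ℂ) (s : Fin 4) (x : ℝ) : ℝ :=
  ((1 / 2 : ℂ) * (star (ψ x) ⬝ᵥ (pauli s).mulVec (ψ x))).re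

/-- One-dimensional spinorial currents `J_s(x) := (ħ/2)·Im(ψ(x)*σ_s ψ′(x))`. -/
noncomputable def JOneD (hbar : ℝ) (ψ : ℝ → Fin 2 → ℂ) (s : Fin 4) (x : ℝ) : ℝ :=
  (hbar / 2) * (star (ψ x) ⬝ᵥ (pauli s).mulVec (fun i => deriv (fun y => ψ y i) x)).im

lemma master (hbar κ d : ℝ) (c : ℂ) (hc : ‖c‖ = 1)
    (ψ : ℝ → Fin 2 → ℂ) (x : ℝ)
    (hx : ∀ᶠ y in nhds x, ψ y =
      ![c * Complex.exp (Complex.I * κ * y), (d : ℂ) * c * Complex.exp (Complex.I * κ * y)]) :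
    nOneD ψ 0 x = (1 + d ^ 2) / 2 ∧ nOneD ψ 1 x = d ∧ nOneD ψ 2 x = 0 ∧
    nOneD ψ 3 x = (1 - d ^ 2) / 2 ∧
    JOneD hbar ψ 0 x = hbar * κ * ((1 + d ^ 2) / 2) ∧
    JOneD hbar ψ 1 x = hbar * κ * d ∧
    JOneD hbar ψ 2 x = 0 ∧
    JOneD hbar ψ 3 x = hbar * κ * ((1 - d ^ 2) / 2) := by
  set z : ℂ := c * Complex.exp (Complex.I * κ * x) with hzdef
  have habs : ‖z‖ = 1 := by
    rw [hzdef, norm_mul, hc, Complex.norm_exp]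
    norm_num [Complex.mul_re, Complex.mul_im]
  have hz : (starRingEnd ℂ) z * z = 1 := by
    rw [mul_comm, Complex.mul_conj, Complex.normSq_eq_norm_sq, habs]
    norm_num
  have hψx : ψ x = ![z, (d : ℂ) * z] := by
    have := hx.self_of_nhds
    rw [this, hzdef]; congr 1; ext i; fin_cases i <;> simp <;> ring
  have hD : HasDerivAt (fun y : ℝ => c * Complex.exp (Complex.I * κ * y))
      (Complex.I * κ * z) x := by
    have h1 : HasDerivAt (fun w : ℂ => c * Complex.exp (Complex.I * κ * w))
        (Complex.I * κ * z) (x : ℂ) := by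
      have h2 : HasDerivAt (fun w : ℂ => Complex.I * κ * w) (Complex.I * κ) (x : ℂ) := by
        simpa using (hasDerivAt_id (x : ℂ)).const_mul (Complex.I * (κ : ℂ))
      have h3 := (Complex.hasDerivAt_exp (Complex.I * κ * x)).comp _ h2
      have := h3.const_mul c
      refine HasDerivAt.congr_deriv this ?_
      rw [hzdef]; ring
    exact h1.comp_ofReal
  have hd0 : deriv (fun y => ψ y 0) x = Complex.I * κ * z := by
    have he : (fun y => ψ y 0) =ᶠ[nhds x] (fun y => c * Complex.exp (Complex.I * κ * y)) :=
      hx.mono fun y hy => by simp only [hy]; simp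
    rw [he.deriv_eq]
    exact hD.deriv
  have hd1 : deriv (fun y => ψ y 1) x = (d : ℂ) * (Complex.I * κ * z) := by
    have he : (fun y => ψ y 1) =ᶠ[nhds x] (fun y => (d : ℂ) * (c * Complex.exp (Complex.I * κ * y))) :=
      hx.mono fun y hy => by simp only [hy]; simp; ring
    rw [he.deriv_eq]
    exact (hD.const_mul _).deriv
  have hsq : z.re * z.re + z.im * z.im = 1 := by
    have h := Complex.normSq_eq_norm_sq z
    rw [habs, Complex.normSq_apply] at h
    nlinarith [h]
  have hsq : z.re * z.re + z.im * z.im = 1 := by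
    have h := Complex.normSq_eq_norm_sq z
    rw [habs, Complex.normSq_apply] at h
    nlinarith [h]
  have hhalf : ((1 : ℂ) / 2).re = 1 / 2 := by norm_num
  refine ⟨?_, ?_, ?_, ?_, ?_, ?_, ?_, ?_⟩
  · simp only [nOneD, JOneD, hψx, hd0, hd1, pauli, Matrix.cons_val_zero, Matrix.cons_val_one,
      Matrix.head_cons, Matrix.mulVec, dotProduct, Fin.sum_univ_two, Pi.star_apply,
      Complex.star_def, Fin.isValue, Matrix.cons_val', Matrix.empty_val',
      Matrix.cons_val_fin_one, Matrix.cons_val_two, Matrix.tail_cons, Matrix.cons_val_three,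
      Matrix.head_fin_const, Matrix.of_apply, Complex.mul_re, Complex.mul_im, Complex.add_re,
      Complex.add_im, Complex.I_re, Complex.I_im, Complex.ofReal_re, Complex.ofReal_im,
      Complex.conj_re, Complex.conj_im, Complex.one_re, Complex.one_im, Complex.zero_re,
      Complex.zero_im, Complex.neg_re, Complex.neg_im, hhalf]
    linear_combination ((1 + d ^ 2) / 2) * hsq
  · simp only [nOneD, JOneD, hψx, hd0, hd1, pauli, Matrix.cons_val_zero, Matrix.cons_val_one,
      Matrix.head_cons, Matrix.mulVec, dotProduct, Fin.sum_univ_two, Pi.star_apply,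
      Complex.star_def, Fin.isValue, Matrix.cons_val', Matrix.empty_val',
      Matrix.cons_val_fin_one, Matrix.cons_val_two, Matrix.tail_cons, Matrix.cons_val_three,
      Matrix.head_fin_const, Matrix.of_apply, Complex.mul_re, Complex.mul_im, Complex.add_re,
      Complex.add_im, Complex.I_re, Complex.I_im, Complex.ofReal_re, Complex.ofReal_im,
      Complex.conj_re, Complex.conj_im, Complex.one_re, Complex.one_im, Complex.zero_re,
      Complex.zero_im, Complex.neg_re, Complex.neg_im, hhalf]
    linear_combination d * hsq
  · simp only [nOneD, JOneD, hψx, hd0, hd1, pauli, Matrix.cons_val_zero, Matrix.cons_val_one,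
      Matrix.head_cons, Matrix.mulVec, dotProduct, Fin.sum_univ_two, Pi.star_apply,
      Complex.star_def, Fin.isValue, Matrix.cons_val', Matrix.empty_val',
      Matrix.cons_val_fin_one, Matrix.cons_val_two, Matrix.tail_cons, Matrix.cons_val_three,
      Matrix.head_fin_const, Matrix.of_apply, Complex.mul_re, Complex.mul_im, Complex.add_re,
      Complex.add_im, Complex.I_re, Complex.I_im, Complex.ofReal_re, Complex.ofReal_im,
      Complex.conj_re, Complex.conj_im, Complex.one_re, Complex.one_im, Complex.zero_re,
      Complex.zero_im, Complex.neg_re, Complex.neg_im, hhalf]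
    linear_combination (0:ℝ) * hsq
  · simp only [nOneD, JOneD, hψx, hd0, hd1, pauli, Matrix.cons_val_zero, Matrix.cons_val_one,
      Matrix.head_cons, Matrix.mulVec, dotProduct, Fin.sum_univ_two, Pi.star_apply,
      Complex.star_def, Fin.isValue, Matrix.cons_val', Matrix.empty_val',
      Matrix.cons_val_fin_one, Matrix.cons_val_two, Matrix.tail_cons, Matrix.cons_val_three,
      Matrix.head_fin_const, Matrix.of_apply, Complex.mul_re, Complex.mul_im, Complex.add_re,
      Complex.add_im, Complex.I_re, Complex.I_im, Complex.ofReal_re, Complex.ofReal_im,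
      Complex.conj_re, Complex.conj_im, Complex.one_re, Complex.one_im, Complex.zero_re,
      Complex.zero_im, Complex.neg_re, Complex.neg_im, hhalf]
    linear_combination ((1 - d ^ 2) / 2) * hsq
  · simp only [nOneD, JOneD, hψx, hd0, hd1, pauli, Matrix.cons_val_zero, Matrix.cons_val_one,
      Matrix.head_cons, Matrix.mulVec, dotProduct, Fin.sum_univ_two, Pi.star_apply,
      Complex.star_def, Fin.isValue, Matrix.cons_val', Matrix.empty_val',
      Matrix.cons_val_fin_one, Matrix.cons_val_two, Matrix.tail_cons, Matrix.cons_val_three,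
      Matrix.head_fin_const, Matrix.of_apply, Complex.mul_re, Complex.mul_im, Complex.add_re,
      Complex.add_im, Complex.I_re, Complex.I_im, Complex.ofReal_re, Complex.ofReal_im,
      Complex.conj_re, Complex.conj_im, Complex.one_re, Complex.one_im, Complex.zero_re,
      Complex.zero_im, Complex.neg_re, Complex.neg_im, hhalf]
    linear_combination (hbar * κ * (1 + d ^ 2) / 2) * hsq
  · simp only [nOneD, JOneD, hψx, hd0, hd1, pauli, Matrix.cons_val_zero, Matrix.cons_val_one,
      Matrix.head_cons, Matrix.mulVec, dotProduct, Fin.sum_univ_two, Pi.star_apply,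
      Complex.star_def, Fin.isValue, Matrix.cons_val', Matrix.empty_val',
      Matrix.cons_val_fin_one, Matrix.cons_val_two, Matrix.tail_cons, Matrix.cons_val_three,
      Matrix.head_fin_const, Matrix.of_apply, Complex.mul_re, Complex.mul_im, Complex.add_re,
      Complex.add_im, Complex.I_re, Complex.I_im, Complex.ofReal_re, Complex.ofReal_im,
      Complex.conj_re, Complex.conj_im, Complex.one_re, Complex.one_im, Complex.zero_re,
      Complex.zero_im, Complex.neg_re, Complex.neg_im, hhalf]
    linear_combination (hbar * κ * d) * hsq
  · simp only [nOneD, JOneD, hψx, hd0, hd1, pauli, Matrix.cons_val_zero, Matrix.cons_val_one,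
      Matrix.head_cons, Matrix.mulVec, dotProduct, Fin.sum_univ_two, Pi.star_apply,
      Complex.star_def, Fin.isValue, Matrix.cons_val', Matrix.empty_val',
      Matrix.cons_val_fin_one, Matrix.cons_val_two, Matrix.tail_cons, Matrix.cons_val_three,
      Matrix.head_fin_const, Matrix.of_apply, Complex.mul_re, Complex.mul_im, Complex.add_re,
      Complex.add_im, Complex.I_re, Complex.I_im, Complex.ofReal_re, Complex.ofReal_im,
      Complex.conj_re, Complex.conj_im, Complex.one_re, Complex.one_im, Complex.zero_re,
      Complex.zero_im, Complex.neg_re, Complex.neg_im, hhalf]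
    linear_combination (0:ℝ) * hsq
  · simp only [nOneD, JOneD, hψx, hd0, hd1, pauli, Matrix.cons_val_zero, Matrix.cons_val_one,
      Matrix.head_cons, Matrix.mulVec, dotProduct, Fin.sum_univ_two, Pi.star_apply,
      Complex.star_def, Fin.isValue, Matrix.cons_val', Matrix.empty_val',
      Matrix.cons_val_fin_one, Matrix.cons_val_two, Matrix.tail_cons, Matrix.cons_val_three,
      Matrix.head_fin_const, Matrix.of_apply, Complex.mul_re, Complex.mul_im, Complex.add_re,
      Complex.add_im, Complex.I_re, Complex.I_im, Complex.ofReal_re, Complex.ofReal_im,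
      Complex.conj_re, Complex.conj_im, Complex.one_re, Complex.one_im, Complex.zero_re,
      Complex.zero_im, Complex.neg_re, Complex.neg_im, hhalf]
    linear_combination (hbar * κ * (1 - d ^ 2) / 2) * hsq

lemma finisher (vF hbar κ s E Vx n0 n1 n2 n3 J0 J1 J2 J3 : ℝ)
    (hs2 : s ^ 2 = 1)
    (h0 : n0 = (1 + s ^ 2) / 2) (h1 : n1 = s) (h2 : n2 = 0) (h3 : n3 = (1 - s ^ 2) / 2)
    (j0 : J0 = hbar * κ * ((1 + s ^ 2) / 2)) (j1 : J1 = hbar * κ * s) (j2 : J2 = 0)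
    (j3 : J3 = hbar * κ * ((1 - s ^ 2) / 2))
    (hκE : vF * (hbar * κ) = s * (E - Vx)) :
    n0 = 1 ∧ n1 = s ∧ n2 = 0 ∧ n3 = 0 ∧ J2 = 0 ∧ J3 = 0 ∧
    vF * J0 = (E - Vx) * n1 ∧ vF * J1 = (E - Vx) * n0 ∧
    vF * J0 + n1 * Vx = n1 * E ∧ vF * J1 + n0 * Vx = n0 * E := by
  subst h0 h1 h2 h3 j0 j1 j2 j3
  refine ⟨by linear_combination (1/2) * hs2, rfl, rfl, by linear_combination (-1/2) * hs2,
    rfl, by linear_combination (-(hbar * κ)/2) * hs2,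
    by linear_combination ((1 + n1 ^ 2)/2) * hκE + (n1 * (E - Vx)/2) * hs2,
    by linear_combination n1 * hκE + ((E - Vx)/2) * hs2,
    by linear_combination ((1 + n1 ^ 2)/2) * hκE + (n1 * (E - Vx)/2) * hs2,
    by linear_combination n1 * hκE + ((E - Vx)/2) * hs2⟩

/-- **Moments of the Klein-tunneling wave function.**  For the wave function `ψ`
describing an electron of energy `E` (`E ≠ 0`, `E ≠ V₀`) hitting the barrier `V`
perpendicularly, with `k = |E|/(ħv_F)`, `q = |E−V₀|/(ħv_F)`, `s = sign E`,
`s′ = sign(E−V₀)`, `α = (1+s′/s)/2`, `β = (1−s′/s)/2` and `|t| = 1`, the moments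
satisfy, for every `x ∉ {a,b}`: `n₀ = 1`, `n₁ = s`, `n₂ = n₃ = 0`, `J₂ = J₃ = 0`,
`v_F·J₀ = (E−V)·n₁` and `v_F·J₁ = (E−V)·n₀`; in particular they form a
piecewise-constant solution with `v_F J₀ + n₁V = n₁E` and `v_F J₁ + n₀V = n₀E`. -/
theorem klein_wavefunction_moments
    (hbar vF V₀ a b E : ℝ) (hhbar : 0 < hbar) (hvF : 0 < vF) (hab : a < b)
    (hE : E ≠ 0) (hEV : E ≠ V₀)
    (V : ℝ → ℝ) (hV : ∀ x, V x = if a < x ∧ x < b then V₀ else 0)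
    (k q s s' α β : ℝ)
    (hk : k = |E| / (hbar * vF)) (hq : q = |E - V₀| / (hbar * vF))
    (hs : s = Real.sign E) (hs' : s' = Real.sign (E - V₀))
    (hα : α = (1 + s' / s) / 2) (hβ : β = (1 - s' / s) / 2)
    (t : ℂ) (ht : ‖t‖ = 1)
    (ψ : ℝ → Fin 2 → ℂ)
    (hψ : ∀ x : ℝ, ψ x =
      if x < a then
        ![Complex.exp (Complex.I * k * x), (s : ℂ) * Complex.exp (Complex.I * k * x)]
      else if x < b then
        ![(α : ℂ) * Complex.exp (Complex.I * q * x)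
            + (β : ℂ) * Complex.exp (-(Complex.I * q * x)),
          (s' : ℂ) * ((α : ℂ) * Complex.exp (Complex.I * q * x)
            - (β : ℂ) * Complex.exp (-(Complex.I * q * x)))]
      else
        ![t * Complex.exp (Complex.I * k * x),
          (s : ℂ) * t * Complex.exp (Complex.I * k * x)]) :
    ∀ x : ℝ, x ≠ a → x ≠ b →
      nOneD ψ 0 x = 1 ∧ nOneD ψ 1 x = s ∧ nOneD ψ 2 x = 0 ∧ nOneD ψ 3 x = 0 ∧
      JOneD hbar ψ 2 x = 0 ∧ JOneD hbar ψ 3 x = 0 ∧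
      vF * JOneD hbar ψ 0 x = (E - V x) * nOneD ψ 1 x ∧
      vF * JOneD hbar ψ 1 x = (E - V x) * nOneD ψ 0 x ∧
      vF * JOneD hbar ψ 0 x + nOneD ψ 1 x * V x = nOneD ψ 1 x * E ∧
      vF * JOneD hbar ψ 1 x + nOneD ψ 0 x * V x = nOneD ψ 0 x * E := by
  have hEVne : E - V₀ ≠ 0 := sub_ne_zero.mpr hEV
  have hs1 : s = -1 ∨ s = 1 := hs ▸ Real.sign_apply_eq_of_ne_zero E hE
  have hs'1 : s' = -1 ∨ s' = 1 := hs' ▸ Real.sign_apply_eq_of_ne_zero _ hEVne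
  have hsne : s ≠ 0 := by rcases hs1 with h | h <;> rw [h] <;> norm_num
  have hs2 : s ^ 2 = 1 := by rcases hs1 with h | h <;> rw [h] <;> norm_num
  have habsE : |E| = s * E := by
    rcases lt_or_gt_of_ne hE with h | h
    · rw [abs_of_neg h, hs, Real.sign_of_neg h]; ring
    · rw [abs_of_pos h, hs, Real.sign_of_pos h]; ring
  have habsEV : |E - V₀| = s' * (E - V₀) := by
    rcases lt_or_gt_of_ne hEVne with h | h
    · rw [abs_of_neg h, hs', Real.sign_of_neg h]; ring
    · rw [abs_of_pos h, hs', Real.sign_of_pos h]; ring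
  have hbvne : hbar * vF ≠ 0 := by positivity
  intro x hxa hxb
  rcases lt_or_gt_of_ne hxa with hxlta | hagtx
  · -- region x < a
    have hVx : V x = 0 := by rw [hV x, if_neg]; push_neg; intro h; linarith
    have hev : ∀ᶠ y in nhds x, ψ y =
        ![(1 : ℂ) * Complex.exp (Complex.I * k * y),
          (s : ℂ) * (1 : ℂ) * Complex.exp (Complex.I * k * y)] := by
      filter_upwards [Iio_mem_nhds hxlta] with y hy
      rw [hψ y, if_pos (Set.mem_Iio.mp hy)]
      norm_num
    obtain ⟨h0, h1, h2, h3, j0, j1, j2, j3⟩ := master hbar k s 1 (by simp) ψ x hev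
    refine finisher vF hbar k s E (V x) _ _ _ _ _ _ _ _ hs2 h0 h1 h2 h3 j0 j1 j2 j3 ?_
    rw [hVx, hk]
    field_simp
    linear_combination habsE
  rcases lt_or_gt_of_ne hxb with hxltb | hbgtx
  · -- region a < x < b
    have hVx : V x = V₀ := by rw [hV x, if_pos ⟨hagtx, hxltb⟩]
    have hss : s' = s ∨ s' = -s := by
      rcases hs1 with h | h <;> rcases hs'1 with h' | h' <;> rw [h, h'] <;> norm_num
    rcases hss with hss | hss
    · -- s' = s, α = 1, β = 0
      have hαv : α = 1 := by rw [hα, hss, div_self hsne]; norm_num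
      have hβv : β = 0 := by rw [hβ, hss, div_self hsne]; norm_num
      have hev : ∀ᶠ y in nhds x, ψ y =
          ![(1 : ℂ) * Complex.exp (Complex.I * q * y),
            (s : ℂ) * (1 : ℂ) * Complex.exp (Complex.I * q * y)] := by
        filter_upwards [Ioo_mem_nhds hagtx hxltb] with y hy
        rw [hψ y, if_neg (not_lt.mpr hy.1.le), if_pos hy.2, hαv, hβv, hss]
        norm_num
      obtain ⟨h0, h1, h2, h3, j0, j1, j2, j3⟩ := master hbar q s 1 (by simp) ψ x hev
      refine finisher vF hbar q s E (V x) _ _ _ _ _ _ _ _ hs2 h0 h1 h2 h3 j0 j1 j2 j3 ?_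
      rw [hVx, hq, habsEV, hss]
      field_simp
    · -- s' = -s, α = 0, β = 1
      have hαv : α = 0 := by
        rw [hα, hss, neg_div, div_self hsne]; norm_num
      have hβv : β = 1 := by
        rw [hβ, hss, neg_div, div_self hsne]; norm_num
      have hev : ∀ᶠ y in nhds x, ψ y =
          ![(1 : ℂ) * Complex.exp (Complex.I * (-q : ℝ) * y),
            (s : ℂ) * (1 : ℂ) * Complex.exp (Complex.I * (-q : ℝ) * y)] := by
        filter_upwards [Ioo_mem_nhds hagtx hxltb] with y hy
        rw [hψ y, if_neg (not_lt.mpr hy.1.le), if_pos hy.2, hαv, hβv, hss,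
          show Complex.I * ((-q : ℝ) : ℂ) * (y : ℂ) = -(Complex.I * q * y) by push_cast; ring]
        push_cast
        norm_num
      obtain ⟨h0, h1, h2, h3, j0, j1, j2, j3⟩ := master hbar (-q) s 1 (by simp) ψ x hev
      refine finisher vF hbar (-q) s E (V x) _ _ _ _ _ _ _ _ hs2 h0 h1 h2 h3 j0 j1 j2 j3 ?_
      rw [hVx, hq, habsEV, hss]
      field_simp
  · -- region b < x
    have hVx : V x = 0 := by rw [hV x, if_neg]; push_neg; intro h; linarith
    have hev : ∀ᶠ y in nhds x, ψ y =
        ![t * Complex.exp (Complex.I * k * y),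
          (s : ℂ) * t * Complex.exp (Complex.I * k * y)] := by
      filter_upwards [Ioi_mem_nhds hbgtx] with y hy
      have hby : b < y := hy
      have h1' : ¬ y < a := by push_neg; linarith
      have h2' : ¬ y < b := by push_neg; linarith
      rw [hψ y, if_neg h1', if_neg h2']
    obtain ⟨h0, h1, h2, h3, j0, j1, j2, j3⟩ := master hbar k s t ht ψ x hev
    refine finisher vF hbar k s E (V x) _ _ _ _ _ _ _ _ hs2 h0 h1 h2 h3 j0 j1 j2 j3 ?_
    rw [hVx, hk]
    field_simp
    linear_combination habsE
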